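/- Let $I \subseteq [0,1]$ be a finite set. Then $1$ is the only possible accumulation point of the set $D(I) = \{1 - \frac{1}{m} + \sum_j \frac{r_j b_j}{m} \mid m \in \mathbb{Z}_{>0},\ r_j \in \mathbb{Z}_{\ge 0},\ b_j \in I,\ b_j > 0\} \cap [0,1]$. -/

import Mathlib

/-- The adjunction coefficient set `D(I)` where only the *positive* elements `b ∈ I`
are allowed to appear in the sum `∑ r_b · b`. -/
def DSetPos (I : Finset ℝ) : Set ℝ :=
  {x : ℝ | (∃ m : ℕ, 0 < m ∧ ∃ r : ℝ → ℕ,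
      x = 1 - 1 / (m : ℝ) + (∑ b ∈ I.filter (fun b => 0 < b), (r b : ℝ) * b) / (m : ℝ)) ∧
    x ∈ Set.Icc (0 : ℝ) 1}

/-- Below any threshold `c < 1`, the set `DSetPos I` is finite. -/
lemma DSetPos_inter_Iio_finite (I : Finset ℝ) (hI : ∀ b ∈ I, b ∈ Set.Icc (0 : ℝ) 1)
    (c : ℝ) (hc : c < 1) : (DSetPos I ∩ Set.Iio c).Finite := by
  classical
  set J := I.filter (fun b => 0 < b) with hJdef
  have hJpos : ∀ b ∈ J, 0 < b := by
    intro b hb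
    exact (Finset.mem_filter.1 hb).2
  set ε : ℝ := if h : J.Nonempty then J.min' h else 1 with hεdef
  have hε : 0 < ε ∧ ∀ b ∈ J, ε ≤ b := by
    by_cases h : J.Nonempty
    · refine ⟨?_, ?_⟩
      · simp only [hεdef, dif_pos h]
        exact hJpos _ (J.min'_mem h)
      · intro b hb
        simp only [hεdef, dif_pos h]
        exact J.min'_le b hb
    · refine ⟨?_, ?_⟩
      · simp [hεdef, dif_neg h]
      · intro b hb
        exact absurd ⟨b, hb⟩ h
  set M : ℕ := ⌈1 / (1 - c)⌉₊ with hMdef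
  set N : ℕ := ⌈1 / ε⌉₊ with hNdef
  have h1c : (0 : ℝ) < 1 - c := by linarith
  refine Set.Finite.subset
    (Set.Finite.image
      (f := fun p : ℕ × ({b // b ∈ J} → ℕ) =>
        1 - 1 / (p.1 : ℝ) + (∑ b ∈ J.attach, (p.2 b : ℝ) * (b : ℝ)) / (p.1 : ℝ))
      (((Set.finite_Iic M).prod (Set.Finite.pi fun _ => Set.finite_Iic N)))) ?_
  rintro y ⟨⟨⟨m, hm, r, rfl⟩, hy01⟩, hylt⟩
  have hm' : (0 : ℝ) < m := by exact_mod_cast hm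
  set s : ℝ := ∑ b ∈ J, (r b : ℝ) * b with hsdef
  have hterm : ∀ b ∈ J, 0 ≤ (r b : ℝ) * b := fun b hb =>
    mul_nonneg (Nat.cast_nonneg _) (hJpos b hb).le
  have hs0 : 0 ≤ s := Finset.sum_nonneg hterm
  have hsm0 : 0 ≤ s / m := div_nonneg hs0 hm'.le
  have hylt' : 1 - 1 / (m : ℝ) + s / m < c := hylt
  -- bound on m
  have h2 : 1 - c < 1 / (m : ℝ) := by linarith
  have h3 : (m : ℝ) < 1 / (1 - c) := by
    rw [lt_div_iff₀ h1c]
    have := (lt_div_iff₀ hm').1 h2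
    linarith
  have hmM : m ≤ M := (Nat.lt_ceil.2 h3).le
  -- bound on s
  have hs1 : s ≤ 1 := by
    have hy1 : 1 - 1 / (m : ℝ) + s / m ≤ 1 := hy01.2
    have h4 : s / m ≤ 1 / m := by linarith
    have := (div_le_div_iff₀ hm' hm').1 h4
    nlinarith
  -- bound on each r b
  have hrN : ∀ b ∈ J, r b ≤ N := by
    intro b hb
    have h5 : (r b : ℝ) * b ≤ s := Finset.single_le_sum hterm hb
    have h6 : (r b : ℝ) * ε ≤ (r b : ℝ) * b :=
      mul_le_mul_of_nonneg_left (hε.2 b hb) (Nat.cast_nonneg _)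
    have h7 : (r b : ℝ) ≤ 1 / ε := by
      rw [le_div_iff₀ hε.1]
      linarith
    have h8 : (r b : ℝ) ≤ (N : ℝ) := h7.trans (Nat.le_ceil _)
    exact_mod_cast h8
  refine ⟨(m, fun b => r b.1), ⟨hmM, ?_⟩, ?_⟩
  · intro b _
    exact hrN b.1 b.2
  · simp only
    congr 1
    congr 1
    exact Finset.sum_attach J (fun b => (r b : ℝ) * b)

/-- Let `I ⊆ [0,1]` be a finite set.  Then `1` is the only possible
accumulation point of the set `D(I)`. -/
theorem DSetPos_accPt_eq_one (I : Finset ℝ) (hI : ∀ b ∈ I, b ∈ Set.Icc (0 : ℝ) 1)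
    (x : ℝ) (hx : AccPt x (Filter.principal (DSetPos I))) : x = 1 := by
  by_contra hne
  have hD : DSetPos I ⊆ Set.Icc 0 1 := fun y hy => hy.2
  have hxcl : x ∈ closure (DSetPos I) := by
    rw [mem_closure_iff_nhds]
    intro U hU
    obtain ⟨y, hy, -⟩ := accPt_iff_nhds.1 hx U hU
    exact ⟨y, hy⟩
  have hxmem : x ∈ Set.Icc (0 : ℝ) 1 :=
    closure_minimal hD isClosed_Icc hxcl
  have hxlt : x < 1 := lt_of_le_of_ne hxmem.2 hne
  set c : ℝ := (x + 1) / 2 with hc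
  have hxc : x < c := by simp only [hc]; linarith
  have hc1 : c < 1 := by simp only [hc]; linarith
  have hfin : (DSetPos I ∩ Set.Iio c).Finite := DSetPos_inter_Iio_finite I hI c hc1
  set S := DSetPos I ∩ Set.Iio c with hS
  have hacc : AccPt x (Filter.principal S) := by
    rw [accPt_iff_nhds] at hx ⊢
    intro U hU
    obtain ⟨y, ⟨⟨hyU, hyc⟩, hyD⟩, hyne⟩ :=
      hx (U ∩ Set.Iio c) (Filter.inter_mem hU (Iio_mem_nhds hxc))
    exact ⟨y, ⟨hyU, hyD, hyc⟩, hyne⟩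
  have hUmem : (S \ {x})ᶜ ∈ nhds x := by
    have hcl : IsClosed (S \ {x}) := (hfin.subset Set.diff_subset).isClosed
    exact hcl.isOpen_compl.mem_nhds (by simp)
  obtain ⟨y, ⟨hyU, hyS⟩, hyne⟩ := accPt_iff_nhds.1 hacc _ hUmem
  exact hyU ⟨hyS, hyne⟩
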